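/- Let S be a commutative ring and f_1,...,f_n a regular sequence generating an ideal I. Then for every k ≥ 0, I^k/I^{k+1} is a free S/I-module with basis given by the images of the monomials f_1^{m_1} ··· f_n^{m_n} with m_1 + ··· + m_n = k. -/

import Mathlib

open MvPolynomial

namespace RegSeqGradedAux

variable {S : Type*} [CommRing S]

lemma degree_eq_sum_univ {n : ℕ} (d : Fin n →₀ ℕ) : d.degree = ∑ i, d i := by
  rw [Finsupp.degree]
  exact Finset.sum_subset (Finset.subset_univ _)
    (fun i _ hi => Finsupp.notMem_support_iff.mp hi)

lemma degree_add {n : ℕ} (s d : Fin n →₀ ℕ) : (s + d).degree = s.degree + d.degree := by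
  simp only [degree_eq_sum_univ, Finsupp.add_apply]
  rw [Finset.sum_add_distrib]

lemma isHomogeneous_of_coeff {n k : ℕ} {F : MvPolynomial (Fin n) S}
    (h : ∀ d, F.coeff d ≠ 0 → Finsupp.degree d = k) : F.IsHomogeneous k := by
  rw [← support_sum_monomial_coeff F]
  exact IsHomogeneous.sum _ _ _ fun d hd =>
    isHomogeneous_monomial _ (h d (MvPolynomial.mem_support_iff.mp hd))

lemma prod_pow_mem {n : ℕ} (f : Fin n → S) (d : Fin n →₀ ℕ) :
    (∏ i ∈ d.support, f i ^ d i) ∈ (Ideal.span (Set.range f)) ^ d.degree := by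
  have h : (Ideal.span (Set.range f)) ^ d.degree
      = ∏ i ∈ d.support, (Ideal.span (Set.range f)) ^ d i := by
    rw [Finset.prod_pow_eq_pow_sum, Finsupp.degree_apply]
  rw [h]
  exact Ideal.prod_mem_prod fun i _ => Ideal.pow_mem_pow (Ideal.subset_span (Set.mem_range_self i)) _

lemma eval_mem_mul {n k : ℕ} (f : Fin n → S) {F : MvPolynomial (Fin n) S}
    (hF : F.IsHomogeneous k) {J : Ideal S} (hc : ∀ d, F.coeff d ∈ J) :
    eval f F ∈ J * (Ideal.span (Set.range f)) ^ k := by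
  rw [eval_eq]
  refine Ideal.sum_mem _ fun d hd => ?_
  have hdeg : d.degree = k := by
    by_contra h
    exact (MvPolynomial.mem_support_iff.mp hd) (hF.coeff_eq_zero h)
  exact Ideal.mul_mem_mul (hc d) (by rw [← hdeg]; exact prod_pow_mem f d)

lemma eval_mem {n k : ℕ} (f : Fin n → S) {F : MvPolynomial (Fin n) S}
    (hF : F.IsHomogeneous k) :
    eval f F ∈ (Ideal.span (Set.range f)) ^ k := by
  have h := eval_mem_mul f hF (J := ⊤) (fun d => trivial)
  rwa [Ideal.top_mul] at h

lemma exists_homogeneous_of_mem_pow {n : ℕ} (f : Fin n → S) :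
    ∀ (k : ℕ) (x : S), x ∈ (Ideal.span (Set.range f)) ^ k →
      ∃ F : MvPolynomial (Fin n) S, F.IsHomogeneous k ∧ eval f F = x := by
  intro k
  induction k with
  | zero => exact fun x _ => ⟨C x, isHomogeneous_C _ _, eval_C _⟩
  | succ k ih =>
    intro x hx
    rw [pow_succ] at hx
    refine Submodule.mul_induction_on hx ?_ ?_
    · intro a ha b hb
      obtain ⟨F, hF, hFa⟩ := ih a ha
      obtain ⟨c, hc⟩ := Ideal.mem_span_range_iff_exists_fun.mp hb
      refine ⟨F * ∑ i, C (c i) * X i, hF.mul (IsHomogeneous.sum _ _ _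
        fun i _ => isHomogeneous_C_mul_X _ _), ?_⟩
      rw [map_mul, hFa]
      congr 1
      simpa using hc
    · rintro x y ⟨F, hF, hFx⟩ ⟨G, hG, hGx⟩
      exact ⟨F + G, hF.add hG, by rw [map_add, hFx, hGx]⟩

lemma sup_pow_succ_le (J K : Ideal S) : ∀ m, (J ⊔ K) ^ (m + 1) ≤ J ^ (m + 1) ⊔ K * (J ⊔ K) ^ m
  | 0 => by simp
  | (m + 1) => by
    calc (J ⊔ K) ^ (m + 2) = (J ⊔ K) ^ (m + 1) * (J ⊔ K) := pow_succ _ _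
      _ ≤ (J ^ (m + 1) ⊔ K * (J ⊔ K) ^ m) * (J ⊔ K) :=
          Ideal.mul_mono_left (sup_pow_succ_le J K m)
      _ = J ^ (m + 1) * J ⊔ J ^ (m + 1) * K ⊔ K * (J ⊔ K) ^ m * (J ⊔ K) := by
          rw [Ideal.sup_mul, Ideal.mul_sup]
      _ ≤ J ^ (m + 2) ⊔ K * (J ⊔ K) ^ (m + 1) := by
          refine sup_le (sup_le ?_ ?_) ?_
          · rw [← pow_succ]
            exact le_sup_left
          · refine le_sup_of_le_right ?_
            rw [mul_comm]
            exact Ideal.mul_mono_right (Ideal.pow_right_mono le_sup_left _)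
          · rw [mul_assoc, ← pow_succ]
            exact le_sup_right

lemma coeff_rename_mem {σ τ : Type*} (h : σ → τ) (hinj : Function.Injective h)
    {p : MvPolynomial σ S} {J : Ideal S} (hp : ∀ d, p.coeff d ∈ J) (m : τ →₀ ℕ) :
    (rename h p).coeff m ∈ J := by
  rcases eq_or_ne ((rename h p).coeff m) 0 with h0 | h0
  · rw [h0]; exact zero_mem _
  · obtain ⟨u, hu, -⟩ := coeff_rename_ne_zero h p m h0
    rw [← hu, coeff_rename_mapDomain h hinj]
    exact hp u

lemma regular_mod_pow {n : ℕ} (f' : Fin n → S) (g : S)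
    (QH : ∀ (k : ℕ) (F : MvPolynomial (Fin n) S), F.IsHomogeneous k →
      eval f' F ∈ (Ideal.span (Set.range f')) ^ (k + 1) →
      ∀ d, F.coeff d ∈ Ideal.span (Set.range f'))
    (hg : ∀ z, g * z ∈ Ideal.span (Set.range f') → z ∈ Ideal.span (Set.range f')) :
    ∀ (m : ℕ) (z : S), g * z ∈ (Ideal.span (Set.range f')) ^ m →
      z ∈ (Ideal.span (Set.range f')) ^ m := by
  intro m
  induction m with
  | zero => intro z _; simpa using Submodule.mem_top
  | succ m ih =>
    intro z hz
    have hz' : z ∈ (Ideal.span (Set.range f')) ^ m :=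
      ih z (Ideal.pow_le_pow_right (Nat.le_succ m) hz)
    obtain ⟨P, hP, hPz⟩ := exists_homogeneous_of_mem_pow f' m z hz'
    have h2 : eval f' (C g * P) ∈ (Ideal.span (Set.range f')) ^ (m + 1) := by
      rw [map_mul, eval_C, hPz]; exact hz
    have h3 := QH m (C g * P) (hP.C_mul g) h2
    have h4 : ∀ d, P.coeff d ∈ Ideal.span (Set.range f') := by
      intro d
      have := h3 d
      rw [coeff_C_mul] at this
      exact hg _ this
    have h5 := eval_mem_mul f' hP h4
    rw [hPz, ← pow_succ'] at h5
    exact h5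

lemma eval_of_homog_zero {n : ℕ} (f : Fin n → S) {F : MvPolynomial (Fin n) S}
    (hF : F.IsHomogeneous 0) : eval f F = F.coeff 0 := by
  rw [eval_eq]
  have hsub : F.support ⊆ {0} := by
    intro d hd
    have hdeg : d.degree = 0 := by
      by_contra h
      exact (MvPolynomial.mem_support_iff.mp hd) (hF.coeff_eq_zero h)
    rw [Finset.mem_singleton]
    exact (Finsupp.degree_eq_zero_iff d).mp hdeg
  rw [Finset.sum_subset hsub
    (fun d _ hd => by rw [MvPolynomial.notMem_support_iff.mp hd, zero_mul])]
  simp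

/-- The main quasi-regularity statement, proven by induction on `n`. -/
theorem main :
    ∀ (n : ℕ) (f : Fin n → S),
      (∀ (i : Fin n) (z : S), f i * z ∈ Ideal.span (f '' {j | j.val < i.val}) →
        z ∈ Ideal.span (f '' {j | j.val < i.val})) →
      ∀ (k : ℕ) (F : MvPolynomial (Fin n) S), F.IsHomogeneous k →
        eval f F ∈ (Ideal.span (Set.range f)) ^ (k + 1) →
        ∀ d, F.coeff d ∈ Ideal.span (Set.range f) := by
  intro n
  induction n with
  | zero =>
    intro f _ k F hF hFe d
    have hd0 : d = 0 := Subsingleton.elim d 0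
    have hC : F = C (F.coeff 0) := (eq_C_of_isEmpty F)
    have h2 : eval f F ∈ Ideal.span (Set.range f) :=
      Ideal.pow_le_self (Nat.succ_ne_zero k) hFe
    rw [hC, eval_C] at h2
    rwa [hd0]
  | succ n IH =>
    intro f hreg k
    induction k with
    | zero =>
      intro F hF hFe d
      rw [pow_one] at hFe
      rw [eval_of_homog_zero f hF] at hFe
      rcases eq_or_ne d 0 with rfl | hd
      · exact hFe
      · rw [hF.coeff_eq_zero (by simpa [Finsupp.degree_eq_zero_iff] using hd)]
        exact zero_mem _
    | succ k ih =>
      intro F hF hFe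
      set f' : Fin n → S := f ∘ Fin.castSucc with hf'
      set g : S := f (Fin.last n) with hgdef
      set J : Ideal S := Ideal.span (Set.range f') with hJdef
      set I : Ideal S := Ideal.span (Set.range f) with hIdef
      have hrange : Set.range f = Set.range f' ∪ {g} := by
        ext x
        constructor
        · rintro ⟨i, rfl⟩
          rcases Fin.eq_castSucc_or_eq_last i with ⟨j, rfl⟩ | rfl
          · exact Or.inl ⟨j, rfl⟩
          · exact Or.inr rfl
        · rintro (⟨j, rfl⟩ | rfl)
          exacts [⟨j.castSucc, rfl⟩, ⟨Fin.last n, rfl⟩]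
      have hIJg : I = J ⊔ Ideal.span {g} := by
        rw [hIdef, hrange, Ideal.span_union]
      have hJI : J ≤ I := hIJg ▸ le_sup_left
      have hgI : g ∈ I := Ideal.subset_span ⟨Fin.last n, rfl⟩
      have hset : f '' {j : Fin (n + 1) | j.val < (Fin.last n).val} = Set.range f' := by
        ext x
        constructor
        · rintro ⟨j, hj, rfl⟩
          exact ⟨⟨j.val, hj⟩, congrArg f (Fin.ext rfl)⟩
        · rintro ⟨j, rfl⟩
          exact ⟨j.castSucc, j.castSucc_lt_last, rfl⟩
      have hgreg : ∀ z, g * z ∈ J → z ∈ J := by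
        intro z hz
        have h := hreg (Fin.last n) z (by rwa [hset])
        rwa [hset] at h
      have hreg' : ∀ (i : Fin n) (z : S), f' i * z ∈ Ideal.span (f' '' {j | j.val < i.val}) →
          z ∈ Ideal.span (f' '' {j | j.val < i.val}) := by
        intro i z
        have hseti : f' '' {j : Fin n | j.val < i.val}
            = f '' {j : Fin (n + 1) | j.val < (i.castSucc).val} := by
          ext x
          constructor
          · rintro ⟨j, hj, rfl⟩
            exact ⟨j.castSucc, hj, rfl⟩
          · rintro ⟨j, hj, rfl⟩
            exact ⟨⟨j.val, lt_trans hj i.isLt⟩, hj, congrArg f (Fin.ext rfl)⟩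
        rw [hseti]
        exact hreg i.castSucc z
      have QH := IH f' hreg'
      set s : Fin (n + 1) →₀ ℕ := Finsupp.single (Fin.last n) 1 with hs
      set B := F.divMonomial s with hB
      set A₀ := F.modMonomial s with hA₀
      have hFdec : monomial s 1 * B + A₀ = F := divMonomial_add_modMonomial F s
      have hA₀coeff_eq : ∀ d : Fin (n + 1) →₀ ℕ, ¬ s ≤ d → A₀.coeff d = F.coeff d :=
        fun d hd => coeff_modMonomial_of_not_le F hd
      have hA₀last : ∀ d : Fin (n + 1) →₀ ℕ, A₀.coeff d ≠ 0 → d (Fin.last n) = 0 := by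
        intro d hd
        by_contra h
        have hle : s ≤ d := by
          rw [hs, Finsupp.single_le_iff]
          omega
        exact hd (coeff_modMonomial_of_le F hle)
      obtain ⟨A, hA⟩ : ∃ A : MvPolynomial (Fin n) S, rename Fin.castSucc A = A₀ := by
        apply exists_rename_eq_of_vars_subset_range _ _ (Fin.castSucc_injective n)
        intro i hi
        obtain ⟨d, hd, hid⟩ := (mem_vars i).mp hi
        have hdne := MvPolynomial.mem_support_iff.mp hd
        have hne : i ≠ Fin.last n := by
          rintro rfl
          exact (Finsupp.mem_support_iff.mp hid) (hA₀last d hdne)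
        obtain ⟨j, rfl⟩ := Fin.exists_castSucc_eq.mpr hne
        exact ⟨j, rfl⟩
      have hsdeg : s.degree = 1 := by
        rw [hs, Finsupp.degree_apply, Finsupp.support_single_ne_zero _ one_ne_zero]
        simp
      have hB_homog : B.IsHomogeneous k := by
        apply isHomogeneous_of_coeff
        intro d hd
        rw [hB, coeff_divMonomial] at hd
        have hdeg : (s + d).degree = k + 1 := by
          by_contra h
          exact hd (hF.coeff_eq_zero h)
        rw [degree_add, hsdeg] at hdeg
        omega
      have hA₀_homog : A₀.IsHomogeneous (k + 1) := by
        apply isHomogeneous_of_coeff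
        intro d hd
        by_cases hle : s ≤ d
        · exact absurd (coeff_modMonomial_of_le F hle) hd
        · rw [hA₀coeff_eq d hle] at hd
          by_contra h
          exact hd (hF.coeff_eq_zero h)
      have hA_homog : A.IsHomogeneous (k + 1) := by
        rw [← IsHomogeneous.rename_isHomogeneous_iff (Fin.castSucc_injective n), hA]
        exact hA₀_homog
      have hFeval : eval f F = g * eval f B + eval f' A := by
        conv_lhs => rw [← hFdec]
        rw [map_add, map_mul]
        congr 1
        · congr 1
          rw [eval_monomial, hs]
          simp
          rfl
        · rw [← hA, eval_rename]
      have hAval : eval f' A ∈ J ^ (k + 1 + 1) →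
          True := fun _ => trivial
      have hAvalJ : eval f' A ∈ J ^ (k + 1) := eval_mem f' hA_homog
      have hsup := sup_pow_succ_le J (Ideal.span {g}) (k + 1)
      rw [← hIJg] at hsup
      -- eval f B ∈ I ^ (k+1)
      obtain ⟨u, hu, v, hv, huv⟩ := Submodule.mem_sup.mp (hsup hFe)
      obtain ⟨w, hw, hvw⟩ := Ideal.mem_span_singleton_mul.mp hv
      have hgdiff : g * (eval f B - w) ∈ J ^ (k + 1) := by
        have h1 : g * (eval f B - w) = u - eval f' A := by
          have h2 : g * eval f B = eval f F - eval f' A := by rw [hFeval]; ring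
          have h3 : g * w = eval f F - u := by rw [← huv, hvw]; ring
          rw [mul_sub, h2, h3]; ring
        rw [h1]
        exact Submodule.sub_mem _ (Ideal.pow_le_pow_right (Nat.le_succ _) hu) hAvalJ
      have hBw : eval f B - w ∈ J ^ (k + 1) := regular_mod_pow f' g QH hgreg (k + 1) _ hgdiff
      have hBval : eval f B ∈ I ^ (k + 1) := by
        have h4 : eval f B = (eval f B - w) + w := by ring
        rw [h4]
        exact Submodule.add_mem _ (Ideal.pow_right_mono hJI (k + 1) hBw) hw
      have hBcoeff : ∀ d, B.coeff d ∈ I := ih B hB_homog hBval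
      -- coefficients of A
      have hgBval : g * eval f B ∈ I ^ (k + 2) := by
        have hx : eval f B ∈ I ^ (k + 1) := hBval
        have h5 := Ideal.mul_mem_mul hgI hx
        rwa [← pow_succ'] at h5
      have hAval2 : eval f' A ∈ I ^ (k + 2) := by
        have h6 : eval f' A = eval f F - g * eval f B := by rw [hFeval]; ring
        rw [h6]
        exact Submodule.sub_mem _ hFe hgBval
      obtain ⟨u', hu', v', hv', huv'⟩ := Submodule.mem_sup.mp (hsup hAval2)
      obtain ⟨w', hw', hvw'⟩ := Ideal.mem_span_singleton_mul.mp hv'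
      have hgw' : g * w' ∈ J ^ (k + 1) := by
        have h7 : g * w' = eval f' A - u' := by rw [← huv', hvw']; ring
        rw [h7]
        exact Submodule.sub_mem _ hAvalJ (Ideal.pow_le_pow_right (Nat.le_succ _) hu')
      have hw'J : w' ∈ J ^ (k + 1) := regular_mod_pow f' g QH hgreg (k + 1) w' hgw'
      obtain ⟨W, hW_homog, hWval⟩ := exists_homogeneous_of_mem_pow f' (k + 1) w' hw'J
      have hAW : eval f' (A - C g * W) ∈ J ^ (k + 1 + 1) := by
        rw [map_sub, map_mul, eval_C, hWval]
        have h8 : eval f' A - g * w' = u' := by rw [← huv', hvw']; ring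
        rw [h8]
        exact hu'
      have hAWcoeff : ∀ d, (A - C g * W).coeff d ∈ J :=
        QH (k + 1) _ (hA_homog.sub (hW_homog.C_mul g)) hAW
      have hAcoeff : ∀ d, A.coeff d ∈ I := by
        intro d
        have h9 : A.coeff d = (A - C g * W).coeff d + g * W.coeff d := by
          rw [coeff_sub, coeff_C_mul]; ring
        rw [h9]
        exact Submodule.add_mem _ (hJI (hAWcoeff d)) (Ideal.mul_mem_right _ _ hgI)
      have hA₀coeffI : ∀ d, A₀.coeff d ∈ I := by
        intro d
        rw [← hA]
        exact coeff_rename_mem _ (Fin.castSucc_injective n) hAcoeff d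
      intro d
      by_cases hd : s ≤ d
      · have h10 : F.coeff d = B.coeff (d - s) := by
          rw [hB, coeff_divMonomial, add_tsub_cancel_of_le hd]
        rw [h10]
        exact hBcoeff _
      · rw [← hA₀coeff_eq d hd]
        exact hA₀coeffI d

lemma eval_eq_sum_adt {n k : ℕ} (f : Fin n → S) {F : MvPolynomial (Fin n) S}
    (hF : F.IsHomogeneous k) :
    eval f F = ∑ m ∈ Finset.Nat.antidiagonalTuple n k,
      F.coeff (Finsupp.equivFunOnFinite.symm m) * ∏ i, f i ^ m i := by
  classical
  rw [eval_eq']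
  have himg : ∑ m ∈ Finset.Nat.antidiagonalTuple n k,
        F.coeff (Finsupp.equivFunOnFinite.symm m) * ∏ i, f i ^ m i
      = ∑ d ∈ (Finset.Nat.antidiagonalTuple n k).image
          (fun m : Fin n → ℕ => Finsupp.equivFunOnFinite.symm m),
          F.coeff d * ∏ i, f i ^ d i := by
    rw [Finset.sum_image (fun a _ b _ h => Finsupp.equivFunOnFinite.symm.injective h)]
    refine Finset.sum_congr rfl fun m _ => rfl
  rw [himg]
  refine Finset.sum_subset ?_ ?_
  · intro d hd
    have hdeg : d.degree = k := by
      by_contra h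
      exact (MvPolynomial.mem_support_iff.mp hd) (hF.coeff_eq_zero h)
    refine Finset.mem_image.mpr ⟨(d : Fin n → ℕ), ?_, ?_⟩
    · rw [Finset.Nat.mem_antidiagonalTuple]
      rw [← degree_eq_sum_univ]
      exact hdeg
    · exact Finsupp.equivFunOnFinite_symm_coe d
  · intro d _ hd
    rw [MvPolynomial.notMem_support_iff.mp hd, zero_mul]

lemma hreg_of_isRegular {n : ℕ} (f : Fin n → S)
    (hreg : RingTheory.Sequence.IsRegular S (List.ofFn f)) (i : Fin n) (z : S)
    (hz : f i * z ∈ Ideal.span (f '' {j | j.val < i.val})) :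
    z ∈ Ideal.span (f '' {j | j.val < i.val}) := by
  have hlen : i.val < (List.ofFn f).length := by simpa using i.isLt
  have hw := hreg.toIsWeaklyRegular.regular_mod_prev i.val hlen
  have hget : (List.ofFn f)[i.val] = f i := by
    simp [List.getElem_ofFn]
  have hst : Ideal.ofList ((List.ofFn f).take i.val)
      = Ideal.span (f '' {j | j.val < i.val}) := by
    have hl : (List.ofFn f).take i.val = List.ofFn (Fin.take i.val (le_of_lt i.isLt) f) :=
      (Fin.ofFn_take_eq_take_ofFn (le_of_lt i.isLt) f).symm
    rw [hl]
    refine congrArg Ideal.span ?_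
    ext x
    constructor
    · intro hx
      have hx' : x ∈ Set.range (Fin.take i.val (le_of_lt i.isLt) f) :=
        (List.mem_ofFn' _ x).mp hx
      obtain ⟨j, rfl⟩ := hx'
      exact ⟨Fin.castLE (le_of_lt i.isLt) j, j.isLt, rfl⟩
    · rintro ⟨j, hj, rfl⟩
      exact (List.mem_ofFn' _ _).mpr ⟨⟨j.val, hj⟩, congrArg f (Fin.ext rfl)⟩
  rw [hget, hst] at hw
  set K := Ideal.span (f '' {j | j.val < i.val}) with hK
  have hKtop : (K • ⊤ : Submodule S S) = K := by
    rw [← Ideal.span_eq K, Submodule.span_smul_eq, Submodule.set_smul_top_eq_span,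
      Ideal.span_eq]
  have h0 : f i • (Submodule.Quotient.mk z : S ⧸ (K • ⊤ : Submodule S S))
      = f i • (0 : S ⧸ (K • ⊤ : Submodule S S)) := by
    rw [smul_zero, ← Submodule.Quotient.mk_smul, Submodule.Quotient.mk_eq_zero, hKtop]
    rw [smul_eq_mul]
    exact hz
  have hfin := hw h0
  rwa [Submodule.Quotient.mk_eq_zero, hKtop] at hfin

end RegSeqGradedAux

/-- Let `S` be a commutative ring and `f₁, …, fₙ` a regular sequence generating the ideal
`I`.  Then for every `k ≥ 0`, `I^k / I^(k+1)` is a free `S/I`-module with basis the images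
of the monomials `f₁^{m₁} ⋯ fₙ^{mₙ}` with `m₁ + ⋯ + mₙ = k`.  (Spelled out elementwise:
the monomials span `I^k` modulo `I^(k+1)`, and any `S`-linear combination of them lying in
`I^(k+1)` has all coefficients in `I`.) -/
theorem regular_sequence_graded_free {S : Type*} [CommRing S] (n : ℕ) (f : Fin n → S)
    (hreg : RingTheory.Sequence.IsRegular S (List.ofFn f)) (k : ℕ) :
    -- the monomials of degree `k` span `I^k` over `S`, modulo `I^(k+1)`
    (∀ x ∈ (Ideal.span (Set.range f)) ^ k, ∃ c : (Fin n → ℕ) → S,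
        x - ∑ m ∈ Finset.Nat.antidiagonalTuple n k, c m * ∏ i, f i ^ m i ∈
          (Ideal.span (Set.range f)) ^ (k + 1)) ∧
    -- the monomials of degree `k` are linearly independent over `S/I`
    (∀ c : (Fin n → ℕ) → S,
        (∑ m ∈ Finset.Nat.antidiagonalTuple n k, c m * ∏ i, f i ^ m i) ∈
            (Ideal.span (Set.range f)) ^ (k + 1) →
        ∀ m ∈ Finset.Nat.antidiagonalTuple n k, c m ∈ Ideal.span (Set.range f)) := by
  classical
  have hreg' := RegSeqGradedAux.hreg_of_isRegular f hreg
  have main := RegSeqGradedAux.main n f hreg'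
  constructor
  · intro x hx
    obtain ⟨F, hF, hFx⟩ := RegSeqGradedAux.exists_homogeneous_of_mem_pow f k x hx
    refine ⟨fun m => F.coeff (Finsupp.equivFunOnFinite.symm m), ?_⟩
    have heq : x = ∑ m ∈ Finset.Nat.antidiagonalTuple n k,
        (fun m => F.coeff (Finsupp.equivFunOnFinite.symm m)) m * ∏ i, f i ^ m i := by
      rw [← hFx, RegSeqGradedAux.eval_eq_sum_adt f hF]
    rw [← heq, sub_self]
    exact zero_mem _
  · intro c hc m hm
    set F : MvPolynomial (Fin n) S := ∑ m ∈ Finset.Nat.antidiagonalTuple n k,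
      MvPolynomial.monomial (Finsupp.equivFunOnFinite.symm m) (c m) with hFdef
    have hF_homog : F.IsHomogeneous k := by
      refine MvPolynomial.IsHomogeneous.sum _ _ _ fun m' hm' => ?_
      refine MvPolynomial.isHomogeneous_monomial _ ?_
      rw [RegSeqGradedAux.degree_eq_sum_univ]
      have := Finset.Nat.mem_antidiagonalTuple.mp hm'
      simpa using this
    have hcoeff : ∀ m' ∈ Finset.Nat.antidiagonalTuple n k,
        F.coeff (Finsupp.equivFunOnFinite.symm m') = c m' := by
      intro m' hm'
      rw [hFdef, MvPolynomial.coeff_sum]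
      rw [Finset.sum_eq_single m']
      · rw [MvPolynomial.coeff_monomial, if_pos rfl]
      · intro b hb hbne
        rw [MvPolynomial.coeff_monomial, if_neg]
        intro hcontra
        exact hbne (Finsupp.equivFunOnFinite.symm.injective hcontra)
      · intro hmem
        exact absurd hm' hmem
    have hFe : MvPolynomial.eval f F ∈ (Ideal.span (Set.range f)) ^ (k + 1) := by
      have heval := RegSeqGradedAux.eval_eq_sum_adt f hF_homog
      rw [heval]
      have : ∑ m' ∈ Finset.Nat.antidiagonalTuple n k,
          F.coeff (Finsupp.equivFunOnFinite.symm m') * ∏ i, f i ^ m' i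
          = ∑ m' ∈ Finset.Nat.antidiagonalTuple n k, c m' * ∏ i, f i ^ m' i := by
        refine Finset.sum_congr rfl fun m' hm' => ?_
        rw [hcoeff m' hm']
      rw [this]
      exact hc
    have := main k F hF_homog hFe (Finsupp.equivFunOnFinite.symm m)
    rwa [hcoeff m hm] at this
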